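/- Let G be a graph, v a vertex of G, and X_1 ⊔ X_2 a partition of the edges incident to v. Form G' by replacing v with a path v - v' - v'' (two new vertices and two new edges), attaching the edges of X_1 to v and the edges of X_2 to v''. Then there is a bijection between the perfect matchings of G and the perfect matchings of G'. -/

import Mathlib

open SimpleGraph

section Aux

variable {V : Type*} (G : SimpleGraph V) (v : V) (X₂ : Set V)

def splitRel : (V ⊕ Bool) → (V ⊕ Bool) → Prop := fun x y =>
  (∃ a b, x = Sum.inl a ∧ y = Sum.inl b ∧ G.Adj a b ∧
    ¬(a = v ∧ b ∈ X₂) ∧ ¬(b = v ∧ a ∈ X₂)) ∨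
  (x = Sum.inl v ∧ y = Sum.inr false) ∨
  (∃ a, a ∈ X₂ ∧ x = Sum.inr true ∧ y = Sum.inl a) ∨
  (x = Sum.inr false ∧ y = Sum.inr true)

def splitG : SimpleGraph (V ⊕ Bool) := SimpleGraph.fromRel (splitRel G v X₂)

variable {G v X₂}

lemma splitG_adj {x y} : (splitG G v X₂).Adj x y ↔
    x ≠ y ∧ (splitRel G v X₂ x y ∨ splitRel G v X₂ y x) := Iff.rfl

lemma adj_ll {a b} (h : (splitG G v X₂).Adj (Sum.inl a) (Sum.inl b)) :
    G.Adj a b ∧ ¬(a = v ∧ b ∈ X₂) ∧ ¬(b = v ∧ a ∈ X₂) := by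
  obtain ⟨hne, h | h⟩ := h
  · rcases h with ⟨a', b', ha, hb, h1, h2, h3⟩ | ⟨h1, h2⟩ | ⟨a', ha', h1, h2⟩ | ⟨h1, h2⟩
    · obtain rfl := Sum.inl.inj ha; obtain rfl := Sum.inl.inj hb; exact ⟨h1, h2, h3⟩
    · exact absurd h2 (by simp)
    · exact absurd h1 (by simp)
    · exact absurd h1 (by simp)
  · rcases h with ⟨a', b', ha, hb, h1, h2, h3⟩ | ⟨h1, h2⟩ | ⟨a', ha', h1, h2⟩ | ⟨h1, h2⟩
    · obtain rfl := Sum.inl.inj ha; obtain rfl := Sum.inl.inj hb; exact ⟨h1.symm, h3, h2⟩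
    · exact absurd h2 (by simp)
    · exact absurd h1 (by simp)
    · exact absurd h1 (by simp)

lemma adj_tl {b} (h : (splitG G v X₂).Adj (Sum.inr true) (Sum.inl b)) : b ∈ X₂ := by
  obtain ⟨hne, h | h⟩ := h <;>
    rcases h with ⟨a', b', ha, hb, h1, h2, h3⟩ | ⟨h1, h2⟩ | ⟨a', ha', h1, h2⟩ | ⟨h1, h2⟩ <;>
    simp_all

lemma adj_f {y} (h : (splitG G v X₂).Adj (Sum.inr false) y) :
    y = Sum.inl v ∨ y = Sum.inr true := by
  obtain ⟨hne, h | h⟩ := h <;>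
    rcases h with ⟨a', b', ha, hb, h1, h2, h3⟩ | ⟨h1, h2⟩ | ⟨a', ha', h1, h2⟩ | ⟨h1, h2⟩ <;>
    simp_all

lemma adj_t {y} (h : (splitG G v X₂).Adj (Sum.inr true) y) :
    y = Sum.inr false ∨ ∃ a ∈ X₂, y = Sum.inl a := by
  obtain ⟨hne, h | h⟩ := h <;>
    rcases h with ⟨a', b', ha, hb, h1, h2, h3⟩ | ⟨h1, h2⟩ | ⟨a', ha', h1, h2⟩ | ⟨h1, h2⟩ <;>
    simp_all

lemma adj_l {a y} (h : (splitG G v X₂).Adj (Sum.inl a) y) :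
    (∃ b, y = Sum.inl b) ∨ (a = v ∧ y = Sum.inr false) ∨ (a ∈ X₂ ∧ y = Sum.inr true) := by
  obtain ⟨hne, h | h⟩ := h <;>
    rcases h with ⟨a', b', ha, hb, h1, h2, h3⟩ | ⟨h1, h2⟩ | ⟨a', ha', h1, h2⟩ | ⟨h1, h2⟩ <;>
    simp_all

lemma adj_lv {b} (h : (splitG G v X₂).Adj (Sum.inl v) (Sum.inl b)) : b ∉ X₂ :=
  fun hb => (adj_ll h).2.1 ⟨rfl, hb⟩

end Aux

section Forward

variable {V : Type*} {G : SimpleGraph V} {v : V} {X₂ : Set V}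

variable (v X₂) in
def matchRel (M : G.Subgraph) : (V ⊕ Bool) → (V ⊕ Bool) → Prop := fun x y =>
  (∃ a b, x = Sum.inl a ∧ y = Sum.inl b ∧ M.Adj a b ∧
    ¬(a = v ∧ b ∈ X₂) ∧ ¬(b = v ∧ a ∈ X₂)) ∨
  (x = Sum.inl v ∧ y = Sum.inr false ∧ ∃ c ∈ X₂, M.Adj v c) ∨
  (∃ a, a ∈ X₂ ∧ M.Adj v a ∧ x = Sum.inr true ∧ y = Sum.inl a) ∨
  (x = Sum.inr false ∧ y = Sum.inr true ∧ ¬ ∃ c ∈ X₂, M.Adj v c)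

lemma matchRel_sub {M : G.Subgraph} {x y} (h : matchRel v X₂ M x y) :
    (splitG G v X₂).Adj x y := by
  rcases h with ⟨a, b, rfl, rfl, h1, h2, h3⟩ | ⟨rfl, rfl, -⟩ | ⟨a, ha, hva, rfl, rfl⟩ |
    ⟨rfl, rfl, -⟩
  · exact ⟨by simpa using (M.adj_sub h1).ne, Or.inl (Or.inl ⟨a, b, rfl, rfl, M.adj_sub h1, h2, h3⟩)⟩
  · exact ⟨by simp, Or.inl (Or.inr (Or.inl ⟨rfl, rfl⟩))⟩
  · exact ⟨by simp, Or.inl (Or.inr (Or.inr (Or.inl ⟨a, ha, rfl, rfl⟩)))⟩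
  · exact ⟨by simp, Or.inl (Or.inr (Or.inr (Or.inr ⟨rfl, rfl⟩)))⟩

variable (v X₂) in
def F (M : G.Subgraph) : (splitG G v X₂).Subgraph where
  verts := Set.univ
  Adj x y := matchRel v X₂ M x y ∨ matchRel v X₂ M y x
  adj_sub h := h.elim matchRel_sub (fun h' => (matchRel_sub h').symm)
  edge_vert _ := Set.mem_univ _
  symm := ⟨fun x y h => Or.symm h⟩

lemma FM_ll {M : G.Subgraph} {a b} : (F v X₂ M).Adj (Sum.inl a) (Sum.inl b) ↔
    M.Adj a b ∧ ¬(a = v ∧ b ∈ X₂) ∧ ¬(b = v ∧ a ∈ X₂) := by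
  constructor
  · rintro (h | h) <;>
      rcases h with ⟨a', b', ha, hb, h1, h2, h3⟩ | ⟨h1, h2, h3⟩ | ⟨a', ha', hv', h1, h2⟩ |
        ⟨h1, h2, h3⟩
    · obtain rfl := Sum.inl.inj ha; obtain rfl := Sum.inl.inj hb; exact ⟨h1, h2, h3⟩
    · exact absurd h2 (by simp)
    · exact absurd h1 (by simp)
    · exact absurd h1 (by simp)
    · obtain rfl := Sum.inl.inj ha; obtain rfl := Sum.inl.inj hb; exact ⟨h1.symm, h3, h2⟩
    · exact absurd h2 (by simp)
    · exact absurd h1 (by simp)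
    · exact absurd h1 (by simp)
  · rintro ⟨h1, h2, h3⟩; exact Or.inl (Or.inl ⟨a, b, rfl, rfl, h1, h2, h3⟩)

lemma FM_lf {M : G.Subgraph} {a} : (F v X₂ M).Adj (Sum.inl a) (Sum.inr false) ↔
    a = v ∧ ∃ c ∈ X₂, M.Adj v c := by
  constructor
  · rintro (h | h) <;>
      rcases h with ⟨a', b', ha, hb, h1, h2, h3⟩ | ⟨h1, h2, h3⟩ | ⟨a', ha', hv', h1, h2⟩ |
        ⟨h1, h2, h3⟩ <;> simp_all
  · rintro ⟨rfl, h⟩; exact Or.inl (Or.inr (Or.inl ⟨rfl, rfl, h⟩))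

lemma FM_lt {M : G.Subgraph} {a} : (F v X₂ M).Adj (Sum.inl a) (Sum.inr true) ↔
    a ∈ X₂ ∧ M.Adj v a := by
  constructor
  · rintro (h | h) <;>
      rcases h with ⟨a', b', ha, hb, h1, h2, h3⟩ | ⟨h1, h2, h3⟩ | ⟨a', ha', hv', h1, h2⟩ |
        ⟨h1, h2, h3⟩ <;> simp_all
  · rintro ⟨ha, h⟩; exact Or.inr (Or.inr (Or.inr (Or.inl ⟨a, ha, h, rfl, rfl⟩)))

lemma FM_ft {M : G.Subgraph} : (F v X₂ M).Adj (Sum.inr false) (Sum.inr true) ↔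
    ¬ ∃ c ∈ X₂, M.Adj v c := by
  constructor
  · rintro (h | h) <;>
      rcases h with ⟨a', b', ha, hb, h1, h2, h3⟩ | ⟨h1, h2, h3⟩ | ⟨a', ha', hv', h1, h2⟩ |
        ⟨h1, h2, h3⟩ <;> simp_all
  · intro h; exact Or.inl (Or.inr (Or.inr (Or.inr ⟨rfl, rfl, h⟩)))

lemma FM_fl {M : G.Subgraph} {a} : (F v X₂ M).Adj (Sum.inr false) (Sum.inl a) ↔
    a = v ∧ ∃ c ∈ X₂, M.Adj v c := by rw [Subgraph.adj_comm, FM_lf]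

lemma FM_tl {M : G.Subgraph} {a} : (F v X₂ M).Adj (Sum.inr true) (Sum.inl a) ↔
    a ∈ X₂ ∧ M.Adj v a := by rw [Subgraph.adj_comm, FM_lt]

lemma FM_tf {M : G.Subgraph} : (F v X₂ M).Adj (Sum.inr true) (Sum.inr false) ↔
    ¬ ∃ c ∈ X₂, M.Adj v c := by rw [Subgraph.adj_comm, FM_ft]

lemma FM_irrefl {M : G.Subgraph} (x) : ¬ (F v X₂ M).Adj x x :=
  fun h => ((F v X₂ M).adj_sub h).ne rfl

end Forward

section FMatch

variable {V : Type*} {G : SimpleGraph V} {v : V} {X₂ : Set V}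

lemma F_isMatching {M : G.Subgraph} (hvX₂ : v ∉ X₂)
    (hM : ∀ a, ∃! b, M.Adj a b) (x : V ⊕ Bool) : ∃! y, (F v X₂ M).Adj x y := by
  obtain (a | b) := x
  · obtain ⟨b, hb, hbu⟩ := hM a
    by_cases hav : a = v
    · subst hav
      by_cases hbX : b ∈ X₂
      · refine ⟨Sum.inr false, FM_lf.2 ⟨rfl, b, hbX, hb⟩, ?_⟩
        rintro (c | (_ | _)) hy
        · obtain ⟨h1, h2, -⟩ := FM_ll.1 hy
          exact absurd ⟨rfl, by rw [hbu c h1]; exact hbX⟩ h2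
        · rfl
        · exact absurd (FM_lt.1 hy).1 hvX₂
      · refine ⟨Sum.inl b, FM_ll.2 ⟨hb, fun h => hbX h.2, fun h => hvX₂ h.2⟩, ?_⟩
        rintro (c | (_ | _)) hy
        · exact congrArg Sum.inl (hbu c (FM_ll.1 hy).1)
        · obtain ⟨-, c, hc, hvc⟩ := FM_lf.1 hy
          exact absurd (by rw [← hbu c hvc]; exact hc) hbX
        · exact absurd (FM_lt.1 hy).1 hvX₂
    · by_cases hX : b = v ∧ a ∈ X₂
      · refine ⟨Sum.inr true, FM_lt.2 ⟨hX.2, by rw [← hX.1]; exact hb.symm⟩, ?_⟩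
        rintro (c | (_ | _)) hy
        · obtain ⟨h1, -, h3⟩ := FM_ll.1 hy
          exact absurd ⟨(hbu c h1) ▸ hX.1, hX.2⟩ h3
        · exact absurd (FM_lf.1 hy).1 hav
        · rfl
      · refine ⟨Sum.inl b, FM_ll.2 ⟨hb, fun h => hav h.1, hX⟩, ?_⟩
        rintro (c | (_ | _)) hy
        · exact congrArg Sum.inl (hbu c (FM_ll.1 hy).1)
        · exact absurd (FM_lf.1 hy).1 hav
        · obtain ⟨haX, hva⟩ := FM_lt.1 hy
          exact absurd ⟨(hbu v hva.symm).symm, haX⟩ hX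
  · by_cases hP : ∃ c ∈ X₂, M.Adj v c
    · obtain ⟨c, hc, hvc⟩ := hP
      obtain (_ | _) := b
      · refine ⟨Sum.inl v, FM_fl.2 ⟨rfl, c, hc, hvc⟩, ?_⟩
        rintro (d | (_ | _)) hy
        · exact congrArg Sum.inl (FM_fl.1 hy).1
        · exact absurd (FM_irrefl _) (fun h => h hy)
        · exact absurd ⟨c, hc, hvc⟩ (FM_ft.1 hy)
      · refine ⟨Sum.inl c, FM_tl.2 ⟨hc, hvc⟩, ?_⟩
        rintro (d | (_ | _)) hy
        · obtain ⟨hd, hvd⟩ := FM_tl.1 hy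
          obtain ⟨e, he, heu⟩ := hM v
          exact congrArg Sum.inl ((heu d hvd).trans (heu c hvc).symm)
        · exact absurd ⟨c, hc, hvc⟩ (FM_tf.1 hy)
        · exact absurd (FM_irrefl _) (fun h => h hy)
    · obtain (_ | _) := b
      · refine ⟨Sum.inr true, FM_ft.2 hP, ?_⟩
        rintro (d | (_ | _)) hy
        · exact absurd (FM_fl.1 hy).2 hP
        · exact absurd (FM_irrefl _) (fun h => h hy)
        · rfl
      · refine ⟨Sum.inr false, FM_tf.2 hP, ?_⟩
        rintro (d | (_ | _)) hy
        · obtain ⟨hd, hvd⟩ := FM_tl.1 hy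
          exact absurd ⟨d, hd, hvd⟩ hP
        · rfl
        · exact absurd (FM_irrefl _) (fun h => h hy)

end FMatch

section Backward

variable {V : Type*} {G : SimpleGraph V} {v : V} {X₂ : Set V}

variable (v X₂) in
def B (hX₂adj : ∀ a ∈ X₂, G.Adj v a) (N : (splitG G v X₂).Subgraph) : G.Subgraph where
  verts := Set.univ
  Adj a b := N.Adj (Sum.inl a) (Sum.inl b) ∨ (a = v ∧ N.Adj (Sum.inr true) (Sum.inl b)) ∨
    (b = v ∧ N.Adj (Sum.inr true) (Sum.inl a))
  adj_sub := by
    rintro a b (h | ⟨rfl, h⟩ | ⟨rfl, h⟩)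
    · exact (adj_ll (N.adj_sub h)).1
    · exact hX₂adj b (adj_tl (N.adj_sub h))
    · exact (hX₂adj a (adj_tl (N.adj_sub h))).symm
  edge_vert _ := Set.mem_univ _
  symm := by
    constructor
    rintro a b (h | ⟨rfl, h⟩ | ⟨rfl, h⟩)
    · exact Or.inl h.symm
    · exact Or.inr (Or.inr ⟨rfl, h⟩)
    · exact Or.inr (Or.inl ⟨rfl, h⟩)

lemma B_isMatching {N : (splitG G v X₂).Subgraph} (hvX₂ : v ∉ X₂)
    (hX₂adj : ∀ a ∈ X₂, G.Adj v a) (hN : ∀ x, ∃! y, N.Adj x y) (a : V) :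
    ∃! b, (B v X₂ hX₂adj N).Adj a b := by
  obtain ⟨y, hy, hyu⟩ := hN (Sum.inl a)
  obtain (c | (_ | _)) := y
  · refine ⟨c, Or.inl hy, ?_⟩
    rintro b' (h | ⟨rfl, h⟩ | ⟨rfl, h⟩)
    · exact Sum.inl.inj (hyu _ h)
    · -- a = v, N.Adj (inr true) (inl b'); show inr false is doubly-unmatched: contradiction
      obtain ⟨z, hz, -⟩ := hN (Sum.inr false)
      rcases adj_f (N.adj_sub hz) with rfl | rfl
      · exact absurd (hyu _ hz.symm) (by simp)
      · obtain ⟨w, hw, hwu⟩ := hN (Sum.inr true)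
        exact absurd ((hwu _ hz.symm).trans (hwu _ h).symm) (by simp)
    · exact absurd (hyu _ h.symm) (by simp)
  · -- partner of (inl a) is (inr false), so a = v
    obtain rfl : a = v := by
      rcases adj_f (N.adj_sub hy.symm) with h | h
      · exact Sum.inl.inj h
      · exact absurd h (by simp)
    obtain ⟨w, hw, hwu⟩ := hN (Sum.inr true)
    rcases adj_t (N.adj_sub hw) with rfl | ⟨c, hc, rfl⟩
    · obtain ⟨z, hz, hzu⟩ := hN (Sum.inr false)
      exact absurd ((hzu _ hy.symm).trans (hzu _ hw.symm).symm) (by simp)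
    · refine ⟨c, Or.inr (Or.inl ⟨rfl, hw⟩), ?_⟩
      rintro b' (h | ⟨-, h⟩ | ⟨rfl, h⟩)
      · exact absurd (hyu _ h) (by simp)
      · exact Sum.inl.inj (hwu _ h)
      · exact absurd (adj_tl (N.adj_sub h)) hvX₂
  · -- partner of (inl a) is (inr true), so a ∈ X₂ and a is matched to v
    have haX : a ∈ X₂ := adj_tl (N.adj_sub hy.symm)
    refine ⟨v, Or.inr (Or.inr ⟨rfl, hy.symm⟩), ?_⟩
    rintro b' (h | ⟨rfl, h⟩ | ⟨rfl, h⟩)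
    · exact absurd (hyu _ h) (by simp)
    · exact absurd haX hvX₂
    · rfl

end Backward

section Inverses

variable {V : Type*} {G : SimpleGraph V} {v : V} {X₂ : Set V}

lemma match_eq {W : Type*} {H : SimpleGraph W} {A B : H.Subgraph}
    (hA : ∀ x, ∃! y, A.Adj x y) (hB : ∀ x, ∃! y, B.Adj x y) (hv : A.verts = B.verts)
    (hle : ∀ x y, A.Adj x y → B.Adj x y) : A = B := by
  apply SimpleGraph.Subgraph.ext hv
  funext x y; apply propext
  refine ⟨hle x y, fun h => ?_⟩
  obtain ⟨z, hz, -⟩ := hA x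
  obtain ⟨w, hw, hwu⟩ := hB x
  rwa [hwu y h, ← hwu z (hle x z hz)]

lemma BF (hvX₂ : v ∉ X₂) (hX₂adj : ∀ a ∈ X₂, G.Adj v a) {M : G.Subgraph}
    (hsp : M.verts = Set.univ) : B v X₂ hX₂adj (F v X₂ M) = M := by
  apply SimpleGraph.Subgraph.ext
  · rw [hsp]; rfl
  · funext a b; apply propext
    show (F v X₂ M).Adj (Sum.inl a) (Sum.inl b) ∨
      (a = v ∧ (F v X₂ M).Adj (Sum.inr true) (Sum.inl b)) ∨
      (b = v ∧ (F v X₂ M).Adj (Sum.inr true) (Sum.inl a)) ↔ M.Adj a b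
    rw [FM_ll, FM_tl, FM_tl]
    constructor
    · rintro (⟨h, -, -⟩ | ⟨rfl, -, h⟩ | ⟨rfl, -, h⟩)
      · exact h
      · exact h
      · exact h.symm
    · intro h
      by_cases h2 : a = v ∧ b ∈ X₂
      · exact Or.inr (Or.inl ⟨h2.1, h2.2, h2.1 ▸ h⟩)
      · by_cases h3 : b = v ∧ a ∈ X₂
        · exact Or.inr (Or.inr ⟨h3.1, h3.2, (h3.1 ▸ h).symm⟩)
        · exact Or.inl ⟨h, h2, h3⟩

lemma FB_le (hvX₂ : v ∉ X₂) (hX₂adj : ∀ a ∈ X₂, G.Adj v a)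
    {N : (splitG G v X₂).Subgraph} (hN : ∀ x, ∃! y, N.Adj x y) {x y}
    (h : matchRel v X₂ (B v X₂ hX₂adj N) x y) : N.Adj x y := by
  have hQadj : ∀ {c}, c ∈ X₂ → (B v X₂ hX₂adj N).Adj v c →
      N.Adj (Sum.inr true) (Sum.inl c) := by
    rintro c hc (h' | ⟨-, h'⟩ | ⟨rfl, h'⟩)
    · exact absurd hc (adj_lv (N.adj_sub h'))
    · exact h'
    · exact absurd hc hvX₂
  rcases h with ⟨a, b, rfl, rfl, h1, h2, h3⟩ | ⟨rfl, rfl, c, hc, hvc⟩ |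
    ⟨a, ha, hva, rfl, rfl⟩ | ⟨rfl, rfl, hP⟩
  · rcases h1 with h' | ⟨rfl, h'⟩ | ⟨rfl, h'⟩
    · exact h'
    · exact absurd ⟨rfl, adj_tl (N.adj_sub h')⟩ h2
    · exact absurd ⟨rfl, adj_tl (N.adj_sub h')⟩ h3
  · have h' : N.Adj (Sum.inr true) (Sum.inl c) := hQadj hc hvc
    obtain ⟨z, hz, hzu⟩ := hN (Sum.inl v)
    rcases adj_l (N.adj_sub hz) with ⟨w, rfl⟩ | ⟨-, rfl⟩ | ⟨hvX, -⟩
    · exfalso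
      obtain ⟨u, hu, huu⟩ := B_isMatching hvX₂ hX₂adj hN v
      have hwc : w = c := (huu w (Or.inl hz)).trans (huu c (Or.inr (Or.inl ⟨rfl, h'⟩))).symm
      exact adj_lv (N.adj_sub hz) (hwc ▸ hc)
    · exact hz
    · exact absurd hvX hvX₂
  · exact hQadj ha hva
  · obtain ⟨z, hz, -⟩ := hN (Sum.inr false)
    rcases adj_f (N.adj_sub hz) with rfl | rfl
    · exfalso
      obtain ⟨w, hw, hwu⟩ := hN (Sum.inr true)
      rcases adj_t (N.adj_sub hw) with rfl | ⟨c, hc, rfl⟩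
      · obtain ⟨u, hu, huu⟩ := hN (Sum.inr false)
        exact absurd ((huu _ hz).trans (huu _ hw.symm).symm) (by simp)
      · exact hP ⟨c, hc, Or.inr (Or.inl ⟨rfl, hw⟩)⟩
    · exact hz

lemma FB (hvX₂ : v ∉ X₂) (hX₂adj : ∀ a ∈ X₂, G.Adj v a)
    {N : (splitG G v X₂).Subgraph} (hN : ∀ x, ∃! y, N.Adj x y)
    (hsp : N.verts = Set.univ) : F v X₂ (B v X₂ hX₂adj N) = N := by
  refine match_eq (F_isMatching hvX₂ (B_isMatching hvX₂ hX₂adj hN)) hN (by rw [hsp]; rfl) ?_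
  rintro x y (h | h)
  · exact FB_le hvX₂ hX₂adj hN h
  · exact (FB_le hvX₂ hX₂adj hN h).symm

end Inverses




/- STATEMENT 6: Vertex-split preserves perfect matchings.  Given a vertex `v` of
`G` and a partition `X₁ ⊔ X₂` of the neighbors of `v` (equivalently of the edges
incident to `v`), form `G'` on `V ⊕ Bool` where `Sum.inl` embeds the old
vertices (with the `X₂`-edges at `v` removed), `Sum.inr false` is the new vertex
`v'`, `Sum.inr true` is the new vertex `v''` carrying the `X₂`-edges, and the
path `v - v' - v''` is added.  Then the perfect matchings of `G` and of `G'` are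
in bijection. -/
open Classical in
theorem stmt6 {V : Type*} [Fintype V] (G : SimpleGraph V) (v : V)
    (X₁ X₂ : Set V) (hdisj : Disjoint X₁ X₂) (hunion : X₁ ∪ X₂ = G.neighborSet v) :
    let G' : SimpleGraph (V ⊕ Bool) := SimpleGraph.fromRel (fun x y =>
      (∃ a b, x = Sum.inl a ∧ y = Sum.inl b ∧ G.Adj a b ∧
        ¬(a = v ∧ b ∈ X₂) ∧ ¬(b = v ∧ a ∈ X₂)) ∨
      (x = Sum.inl v ∧ y = Sum.inr false) ∨
      (∃ a, a ∈ X₂ ∧ x = Sum.inr true ∧ y = Sum.inl a) ∨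
      (x = Sum.inr false ∧ y = Sum.inr true))
    Nonempty ({M : G.Subgraph // M.IsPerfectMatching} ≃
      {M : G'.Subgraph // M.IsPerfectMatching}) := by
  intro G'
  have hX₂adj : ∀ a ∈ X₂, G.Adj v a := fun a ha =>
    (hunion ▸ Set.mem_union_right X₁ ha : a ∈ G.neighborSet v)
  have hvX₂ : v ∉ X₂ := fun h => G.irrefl (hX₂adj v h)
  have key : Nonempty ({M : G.Subgraph // M.IsPerfectMatching} ≃
      {M : (splitG G v X₂).Subgraph // M.IsPerfectMatching}) := by
    refine ⟨⟨fun M => ⟨F v X₂ M.1, Subgraph.isPerfectMatching_iff.2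
        (F_isMatching hvX₂ (Subgraph.isPerfectMatching_iff.1 M.2))⟩,
      fun N => ⟨B v X₂ hX₂adj N.1, Subgraph.isPerfectMatching_iff.2
        (B_isMatching hvX₂ hX₂adj (Subgraph.isPerfectMatching_iff.1 N.2))⟩, ?_, ?_⟩⟩
    · intro M
      exact Subtype.ext (BF hvX₂ hX₂adj (Set.eq_univ_of_forall M.2.2))
    · intro N
      exact Subtype.ext (FB hvX₂ hX₂adj (Subgraph.isPerfectMatching_iff.1 N.2)
        (Set.eq_univ_of_forall N.2.2))
  exact key
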